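/- arXiv:gr-qc/9308028 — 3 statements merged into one kernel-verified Lean document; each statement's English description precedes it below -/
import Mathlib

section
/- Let R be a reduced crystallographic root system in a finite-dimensional real inner product space E, let S be a base of R, and let H lie in the open fundamental Weyl chamber K(S). Then the set S(H) = {α ∈ R : ⟨α, H⟩ = 2} is linearly independent in E. -/
open scoped RealInnerProductSpace

/-- A reduced crystallographic root system in a real inner product space `E`:
a finite set of nonzero vectors, with integral Cartan numbers, closed under the
reflections it defines, and such that the only multiples of a root `α` that are
roots are `±α`. -/
def IsRootSystem {E : Type*} [NormedAddCommGroup E] [InnerProductSpace ℝ E]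
    (R : Set E) : Prop :=
  R.Finite ∧ (0 : E) ∉ R ∧
  (∀ α ∈ R, ∀ β ∈ R, ∃ n : ℤ, 2 * ⟪β, α⟫ / ⟪α, α⟫ = (n : ℝ)) ∧
  (∀ α ∈ R, ∀ β ∈ R, β - (2 * ⟪β, α⟫ / ⟪α, α⟫) • α ∈ R) ∧
  (∀ α ∈ R, ∀ t : ℝ, t • α ∈ R → t = 1 ∨ t = -1)

/-- `S` is a base (simple system) of the root system `R`: a linearly independent
subset such that every root is an integer linear combination of elements of `S`
with coefficients all nonnegative or all nonpositive. -/
def IsBase {E : Type*} [NormedAddCommGroup E] [InnerProductSpace ℝ E]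
    (R S : Set E) : Prop :=
  S ⊆ R ∧ LinearIndependent ℝ ((↑) : S → E) ∧
  ∀ β ∈ R, ∃ c : E →₀ ℤ, ↑c.support ⊆ S ∧
    β = c.sum (fun α n => (n : ℝ) • α) ∧
    ((∀ α, 0 ≤ c α) ∨ (∀ α, c α ≤ 0))

section Aux

variable {E : Type*} [NormedAddCommGroup E] [InnerProductSpace ℝ E]

/-- Vectors lying strictly on one side of a hyperplane, with pairwise nonpositive
inner products, are linearly independent. -/
lemma li_halfspace (T : Set E) (H : E) (hpos : ∀ v ∈ T, 0 < ⟪v, H⟫)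
    (hnp : ∀ v ∈ T, ∀ w ∈ T, v ≠ w → ⟪v, w⟫ ≤ 0) :
    LinearIndependent ℝ ((↑) : T → E) := by
  classical
  rw [linearIndependent_subtype_iff, linearIndepOn_iff]
  intro l hl hsum
  rw [Finsupp.mem_supported] at hl
  rw [Finsupp.linearCombination_apply, Finsupp.sum] at hsum
  simp only [id_eq] at hsum
  set P := l.support.filter (fun v => 0 < l v) with hP
  set N := l.support.filter (fun v => ¬ 0 < l v) with hN
  have hsplit : P ∪ N = l.support := Finset.filter_union_filter_not_eq _ _
  have hdisj : Disjoint P N := Finset.disjoint_filter_filter_not _ _ _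
  have hPpos : ∀ v ∈ P, 0 < l v := fun v hv => (Finset.mem_filter.mp hv).2
  have hNneg : ∀ v ∈ N, l v < 0 := by
    intro v hv
    rcases Finset.mem_filter.mp hv with ⟨hv1, hv2⟩
    exact lt_of_le_of_ne (not_lt.mp hv2) (Finsupp.mem_support_iff.mp hv1)
  have hmemT : ∀ v ∈ l.support, v ∈ T := fun v hv => hl hv
  set u := ∑ v ∈ P, l v • v with hu
  set w := ∑ v ∈ N, l v • v with hw
  have huw : u + w = 0 := by
    rw [hu, hw, ← Finset.sum_union hdisj, hsplit]; exact hsum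
  have hun : u = -w := eq_neg_of_add_eq_zero_left huw
  have hiw : 0 ≤ ⟪u, w⟫ := by
    rw [hu, hw, sum_inner]
    apply Finset.sum_nonneg
    intro v hv
    rw [real_inner_smul_left, inner_sum]
    rw [Finset.mul_sum]
    apply Finset.sum_nonneg
    intro x hx
    rw [real_inner_smul_right]
    have hvx : v ≠ x := by
      intro h; subst h
      exact absurd (hPpos v hv) (not_lt.mpr (hNneg v hx).le)
    have h1 : 0 < l v := hPpos v hv
    have h2 : l x < 0 := hNneg x hx
    have h3 : ⟪v, x⟫ ≤ 0 :=
      hnp v (hmemT v (Finset.filter_subset _ _ hv)) x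
        (hmemT x (Finset.filter_subset _ _ hx)) hvx
    exact mul_nonneg h1.le (mul_nonneg_of_nonpos_of_nonpos h2.le h3)
  have huu : ⟪u, u⟫ ≤ 0 := by
    calc ⟪u, u⟫ = ⟪u, -w⟫ := by rw [← hun]
    _ = -⟪u, w⟫ := by rw [inner_neg_right]
    _ ≤ 0 := by linarith
  have hu0 : u = 0 := by
    have := real_inner_self_nonneg (x := u)
    exact inner_self_eq_zero.mp (le_antisymm huu this)
  have hw0 : w = 0 := by
    have h' : -w = 0 := by rw [← hun, hu0]
    exact neg_eq_zero.mp h'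
  have hPempty : P = ∅ := by
    by_contra h
    have hne : P.Nonempty := Finset.nonempty_of_ne_empty h
    have : 0 < ⟪u, H⟫ := by
      rw [hu, sum_inner]
      apply Finset.sum_pos _ hne
      intro v hv
      rw [real_inner_smul_left]
      exact mul_pos (hPpos v hv) (hpos v (hmemT v (Finset.filter_subset _ _ hv)))
    rw [hu0] at this; simp at this
  have hNempty : N = ∅ := by
    by_contra h
    have hne : N.Nonempty := Finset.nonempty_of_ne_empty h
    have : ⟪w, H⟫ < 0 := by
      rw [hw, sum_inner]
      apply Finset.sum_neg _ hne
      intro v hv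
      rw [real_inner_smul_left]
      exact mul_neg_of_neg_of_pos (hNneg v hv)
        (hpos v (hmemT v (Finset.filter_subset _ _ hv)))
    rw [hw0] at this; simp at this
  have : l.support = ∅ := by rw [← hsplit, hPempty, hNempty]; simp
  exact Finsupp.support_eq_empty.mp this

/-- A root system contains the negative of each of its roots. -/
lemma IsRootSystem.neg_mem {R : Set E} (hR : IsRootSystem R) {α : E} (hα : α ∈ R) :
    -α ∈ R := by
  obtain ⟨hfin, h0, hcart, hrefl, hred⟩ := hR
  have hne : α ≠ 0 := fun h => h0 (h ▸ hα)
  have hself : ⟪α, α⟫ ≠ 0 := inner_self_ne_zero.mpr hne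
  have h2 : (2 * ⟪α, α⟫ / ⟪α, α⟫ : ℝ) = 2 := by
    field_simp
  have := hrefl α hα α hα
  rw [h2] at this
  have h3 : α - (2 : ℝ) • α = -α := by
    rw [two_smul]; abel
  rwa [h3] at this

/-- If `α ≠ β` are roots with `⟪α, β⟫ > 0`, then `α - β` is a root. -/
lemma IsRootSystem.sub_mem {R : Set E} (hR : IsRootSystem R) {α β : E}
    (hα : α ∈ R) (hβ : β ∈ R) (hne : α ≠ β) (hip : 0 < ⟪α, β⟫) :
    α - β ∈ R := by
  obtain ⟨hfin, h0, hcart, hrefl, hred⟩ := hR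
  have hαne : α ≠ 0 := fun h => h0 (h ▸ hα)
  have hβne : β ≠ 0 := fun h => h0 (h ▸ hβ)
  have ha : 0 < ⟪α, α⟫ :=
    lt_of_le_of_ne real_inner_self_nonneg fun h => hαne (inner_self_eq_zero.mp h.symm)
  have hb : 0 < ⟪β, β⟫ :=
    lt_of_le_of_ne real_inner_self_nonneg fun h => hβne (inner_self_eq_zero.mp h.symm)
  obtain ⟨n, hn⟩ := hcart β hβ α hα
  obtain ⟨m, hm⟩ := hcart α hα β hβ
  -- hn : 2 * ⟪α, β⟫ / ⟪β, β⟫ = n ;  hm : 2 * ⟪β, α⟫ / ⟪α, α⟫ = m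
  have hcomm : ⟪β, α⟫ = ⟪α, β⟫ := real_inner_comm α β
  have hnpos : (0 : ℝ) < (n : ℝ) := by
    rw [← hn]; positivity
  have hmpos : (0 : ℝ) < (m : ℝ) := by
    rw [← hm, hcomm]; positivity
  have hn1 : 1 ≤ n := by exact_mod_cast hnpos
  have hm1 : 1 ≤ m := by exact_mod_cast hmpos
  rcases eq_or_lt_of_le hn1 with hn' | hn'
  · -- n = 1 : reflect α in β
    have := hrefl β hβ α hα
    rw [hn, ← hn', Int.cast_one, one_smul] at this
    exact this
  · rcases eq_or_lt_of_le hm1 with hm' | hm'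
    · -- m = 1 : reflect β in α, then negate
      have := hrefl α hα β hβ
      rw [hm, ← hm', Int.cast_one, one_smul] at this
      have h2 := IsRootSystem.neg_mem ⟨hfin, h0, hcart, hrefl, hred⟩ this
      rwa [neg_sub] at h2
    · -- n ≥ 2 and m ≥ 2 : impossible
      exfalso
      have hn2 : (2 : ℝ) ≤ (n : ℝ) := by exact_mod_cast hn'
      have hm2 : (2 : ℝ) ≤ (m : ℝ) := by exact_mod_cast hm'
      have h1 : ⟪β, β⟫ ≤ ⟪α, β⟫ := by
        have : (2 : ℝ) ≤ 2 * ⟪α, β⟫ / ⟪β, β⟫ := by rw [hn]; exact hn2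
        rw [le_div_iff₀ hb] at this; linarith
      have h2 : ⟪α, α⟫ ≤ ⟪α, β⟫ := by
        have : (2 : ℝ) ≤ 2 * ⟪β, α⟫ / ⟪α, α⟫ := by rw [hm]; exact hm2
        rw [le_div_iff₀ ha, hcomm] at this; linarith
      have hsub : ⟪α - β, α - β⟫ ≤ 0 := by
        rw [inner_sub_left, inner_sub_right, inner_sub_right, hcomm]
        linarith
      have := real_inner_self_nonneg (x := α - β)
      have h0' : α - β = 0 := inner_self_eq_zero.mp (le_antisymm hsub this)
      exact hne (sub_eq_zero.mp h0')

end Aux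

/-- For `H` in the open fundamental Weyl chamber, the set
`S(H) = {α ∈ R : ⟪α,H⟫ = 2}` is linearly independent. -/
theorem SH_linearIndependent
    {E : Type*} [NormedAddCommGroup E] [InnerProductSpace ℝ E] [FiniteDimensional ℝ E]
    (R S : Set E) (hR : IsRootSystem R) (hS : IsBase R S)
    (H : E) (hH : ∀ α ∈ S, 0 < ⟪α, H⟫) :
    LinearIndependent ℝ ((↑) : {α : E | α ∈ R ∧ ⟪α, H⟫ = 2} → E) := by
  obtain ⟨hSR, hSli, hbase⟩ := hS
  have h0 : (0 : E) ∉ R := hR.2.1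
  -- no root is orthogonal to H
  have horth : ∀ γ ∈ R, ⟪γ, H⟫ ≠ 0 := by
    intro γ hγ hzero
    obtain ⟨c, hcs, hcsum, hsign⟩ := hbase γ hγ
    have hγne : γ ≠ 0 := fun h => h0 (h ▸ hγ)
    have hsupp : c.support.Nonempty := by
      rcases Finset.eq_empty_or_nonempty c.support with h | h
      · have hc0 : c = 0 := Finsupp.support_eq_empty.mp h
        rw [hc0, Finsupp.sum_zero_index] at hcsum
        exact (hγne hcsum).elim
      · exact h
    have hip : ⟪γ, H⟫ = ∑ α ∈ c.support, (c α : ℝ) * ⟪α, H⟫ := by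
      rw [hcsum, Finsupp.sum, sum_inner]
      exact Finset.sum_congr rfl fun α _ => real_inner_smul_left _ _ _
    have hposH : ∀ α ∈ c.support, 0 < ⟪α, H⟫ := fun α hα => hH α (hcs hα)
    rcases hsign with hs | hs
    · have : 0 < ∑ α ∈ c.support, (c α : ℝ) * ⟪α, H⟫ := by
        apply Finset.sum_pos _ hsupp
        intro α hα
        have hca : 0 < c α :=
          lt_of_le_of_ne (hs α) (Ne.symm (Finsupp.mem_support_iff.mp hα))
        exact mul_pos (by exact_mod_cast hca) (hposH α hα)
      exact absurd hip.symm (by rw [hzero]; exact ne_of_gt this)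
    · have : ∑ α ∈ c.support, (c α : ℝ) * ⟪α, H⟫ < 0 := by
        apply Finset.sum_neg _ hsupp
        intro α hα
        have hca : c α < 0 :=
          lt_of_le_of_ne (hs α) (Finsupp.mem_support_iff.mp hα)
        exact mul_neg_of_neg_of_pos (by exact_mod_cast hca) (hposH α hα)
      exact absurd hip.symm (by rw [hzero]; exact ne_of_lt this)
  apply li_halfspace
  · rintro v ⟨_, hv2⟩
    rw [hv2]; norm_num
  · rintro v ⟨hv1, hv2⟩ w ⟨hw1, hw2⟩ hvw
    by_contra hcon
    push_neg at hcon
    have hmem : v - w ∈ R := hR.sub_mem hv1 hw1 hvw hcon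
    have : ⟪v - w, H⟫ = 0 := by
      rw [inner_sub_left, hv2, hw2]; ring
    exact horth _ hmem this
end

section
/- Let R be a reduced crystallographic root system in a finite-dimensional real inner product space E, let S be a base of R, and let H lie in the open fundamental Weyl chamber K(S). Suppose S(H) = {α ∈ R : ⟨α, H⟩ = 2} is nonempty, and let R(H) be the set of all images of elements of S(H) under the group generated by the reflections s_β for β ∈ S(H). Then R(H) is a reduced crystallographic root system in the span of S(H), R(H) ⊆ R, and S(H) is a base of R(H): every element of R(H) is an integer linear combination of elements of S(H) with coefficients all nonnegative or all nonpositive. -/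
open scoped RealInnerProductSpace

/-- The reflection `s_β : x ↦ x - (2⟪x,β⟫/⟪β,β⟫) β` in the hyperplane orthogonal
to `β`, as an element of the monoid `Function.End E` of self-maps of `E`. -/
noncomputable def sRefl {E : Type*} [NormedAddCommGroup E] [InnerProductSpace ℝ E]
    (β : E) : Function.End E :=
  fun x => x - (2 * ⟪x, β⟫ / ⟪β, β⟫) • β

/-- The set of all images of elements of `Sg` under the group generated by the
reflections `s_β`, `β ∈ Sg` (since each reflection is an involution, this group
coincides with the generated monoid of self-maps). -/
noncomputable def subSystem {E : Type*} [NormedAddCommGroup E] [InnerProductSpace ℝ E]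
    (Sg : Set E) : Set E :=
  {x | ∃ w ∈ Submonoid.closure (sRefl '' Sg), ∃ α ∈ Sg, x = w α}

/-- `β` is an integer linear combination of elements of `S'` with all
coefficients nonnegative. -/
def IsNonnegCombo {E : Type*} [NormedAddCommGroup E] [InnerProductSpace ℝ E]
    (S' : Set E) (β : E) : Prop :=
  ∃ c : E →₀ ℤ, ↑c.support ⊆ S' ∧ β = c.sum (fun α n => (n : ℝ) • α) ∧ ∀ α, 0 ≤ c α

/-- The inverse root `α* = 2α/⟪α,α⟫`. -/
noncomputable def invRoot {E : Type*} [NormedAddCommGroup E] [InnerProductSpace ℝ E]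
    (α : E) : E :=
  (2 / ⟪α, α⟫) • α

section Helpers

variable {E : Type*} [NormedAddCommGroup E] [InnerProductSpace ℝ E]

lemma sRefl_apply (β x : E) : sRefl β x = x - (2 * ⟪x, β⟫ / ⟪β, β⟫) • β := rfl

lemma sRefl_inner (β x y : E) : ⟪sRefl β x, sRefl β y⟫ = ⟪x, y⟫ := by
  rcases eq_or_ne β 0 with rfl | hb
  · simp [sRefl_apply]
  · have hbb : ⟪β, β⟫ ≠ 0 := by
      simpa [real_inner_self_eq_norm_sq] using fun h => hb (by simpa [real_inner_self_eq_norm_sq] using h)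
    simp only [sRefl_apply, inner_sub_left, inner_sub_right, real_inner_smul_left,
      real_inner_smul_right]
    rw [real_inner_comm β x, real_inner_comm β y]
    field_simp
    ring

lemma sRefl_sRefl (β x : E) : sRefl β (sRefl β x) = x := by
  rcases eq_or_ne β 0 with rfl | hb
  · simp [sRefl_apply]
  · have hbb : ⟪β, β⟫ ≠ 0 := by
      simpa using fun h => hb ((inner_self_eq_zero (𝕜 := ℝ)).mp h)
    simp only [sRefl_apply, inner_sub_left, real_inner_smul_left]
    have hc : 2 * (⟪x, β⟫ - 2 * ⟪x, β⟫ / ⟪β, β⟫ * ⟪β, β⟫) / ⟪β, β⟫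
        = -(2 * ⟪x, β⟫ / ⟪β, β⟫) := by field_simp; ring
    rw [hc]; module

lemma sRefl_add (β x y : E) : sRefl β (x + y) = sRefl β x + sRefl β y := by
  simp only [sRefl_apply, inner_add_left]
  have hc : 2 * (⟪x, β⟫ + ⟪y, β⟫) / ⟪β, β⟫
      = 2 * ⟪x, β⟫ / ⟪β, β⟫ + 2 * ⟪y, β⟫ / ⟪β, β⟫ := by ring
  rw [hc]; module

lemma sRefl_smul (β : E) (c : ℝ) (x : E) : sRefl β (c • x) = c • sRefl β x := by
  simp only [sRefl_apply, inner_smul_left, RCLike.star_def, starRingEnd_apply, star_trivial]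
  have hc : 2 * (c * ⟪x, β⟫) / ⟪β, β⟫ = c * (2 * ⟪x, β⟫ / ⟪β, β⟫) := by ring
  rw [hc]; module

end Helpers

section Closure

variable {E : Type*} [NormedAddCommGroup E] [InnerProductSpace ℝ E]

/-- Basic properties of elements of the monoid generated by reflections. -/
lemma good_of_mem_closure (SH : Set E) :
    ∀ w ∈ Submonoid.closure (sRefl '' SH),
      (∀ x y : E, w (x + y) = w x + w y) ∧
      (∀ (c : ℝ) (x : E), w (c • x) = c • w x) ∧
      (∀ x y : E, ⟪w x, w y⟫ = ⟪x, y⟫) ∧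
      ∃ w' ∈ Submonoid.closure (sRefl '' SH),
        (∀ x, w' (w x) = x) ∧ (∀ x, w (w' x) = x) := by
  intro w hw
  induction hw using Submonoid.closure_induction with
  | mem w hw =>
    obtain ⟨β, hβ, rfl⟩ := hw
    exact ⟨sRefl_add β, sRefl_smul β, sRefl_inner β,
      ⟨sRefl β, Submonoid.subset_closure ⟨β, hβ, rfl⟩, sRefl_sRefl β, sRefl_sRefl β⟩⟩
  | one => exact ⟨fun _ _ => rfl, fun _ _ => rfl, fun _ _ => rfl,
      ⟨1, Submonoid.one_mem _, fun _ => rfl, fun _ => rfl⟩⟩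
  | mul w₁ w₂ h₁ h₂ ih₁ ih₂ =>
    obtain ⟨a1, s1, i1, w1', hw1', l1, r1⟩ := ih₁
    obtain ⟨a2, s2, i2, w2', hw2', l2, r2⟩ := ih₂
    refine ⟨?_, ?_, ?_, ⟨w2' * w1', Submonoid.mul_mem _ hw2' hw1', ?_, ?_⟩⟩
    · intro x y
      show w₁ (w₂ (x + y)) = w₁ (w₂ x) + w₁ (w₂ y)
      rw [a2, a1]
    · intro c x
      show w₁ (w₂ (c • x)) = c • w₁ (w₂ x)
      rw [s2, s1]
    · intro x y
      show ⟪w₁ (w₂ x), w₁ (w₂ y)⟫ = ⟪x, y⟫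
      rw [i1, i2]
    · intro x
      show w2' (w1' (w₁ (w₂ x))) = x
      rw [l1, l2]
    · intro x
      show w₁ (w₂ (w2' (w1' x))) = x
      rw [r2, r1]

end Closure


section SubSystem

variable {E : Type*} [NormedAddCommGroup E] [InnerProductSpace ℝ E] {SH : Set E}

lemma subset_subSystem : SH ⊆ subSystem SH :=
  fun α hα => ⟨1, Submonoid.one_mem _, α, hα, rfl⟩

lemma sRefl_mem_closure_of_mem_subSystem {γ : E} (hγ : γ ∈ subSystem SH) :
    sRefl γ ∈ Submonoid.closure (sRefl '' SH) := by
  obtain ⟨w, hw, α, hα, rfl⟩ := hγ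
  obtain ⟨ha, hs, hi, w', hw', hl, hr⟩ := good_of_mem_closure SH w hw
  obtain ⟨ha', hs', hi', -⟩ := good_of_mem_closure SH w' hw'
  have key : sRefl (w α) = w * sRefl α * w' := by
    funext x
    show _ = w (sRefl α (w' x))
    have h1 : ⟪w' x, α⟫ = ⟪x, w α⟫ := by
      rw [← hi (w' x) α, hr]
    have h2 : ⟪α, α⟫ = ⟪w α, w α⟫ := (hi α α).symm
    have h3 : ∀ c : ℝ, w (w' x - c • α) = x - c • w α := by
      intro c
      rw [sub_eq_add_neg, ← neg_smul, ha, hs, hr, neg_smul, ← sub_eq_add_neg]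
    rw [sRefl_apply, sRefl_apply, h1, h3, h2]
  rw [key]
  exact Submonoid.mul_mem _ (Submonoid.mul_mem _ hw
    (Submonoid.subset_closure ⟨α, hα, rfl⟩)) hw'

lemma sRefl_mem_subSystem {γ β : E} (hγ : γ ∈ subSystem SH) (hβ : β ∈ subSystem SH) :
    sRefl γ β ∈ subSystem SH := by
  obtain ⟨w, hw, α, hα, rfl⟩ := hβ
  exact ⟨sRefl γ * w, Submonoid.mul_mem _ (sRefl_mem_closure_of_mem_subSystem hγ) hw,
    α, hα, rfl⟩

lemma neg_mem_subSystem {γ : E} (hγ : γ ∈ subSystem SH) (h0 : γ ≠ 0) :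
    -γ ∈ subSystem SH := by
  have : sRefl γ γ = -γ := by
    have hbb : ⟪γ, γ⟫ ≠ 0 := fun h => h0 ((inner_self_eq_zero (𝕜 := ℝ)).mp h)
    rw [sRefl_apply]
    rw [mul_div_assoc, div_self hbb, mul_one]
    module
  rw [← this]
  exact sRefl_mem_subSystem hγ hγ

end SubSystem


section Main

variable {E : Type*} [NormedAddCommGroup E] [InnerProductSpace ℝ E]
variable {R S : Set E} (hR : IsRootSystem R) (hS : IsBase R S)
variable {H : E} (hH : ∀ α ∈ S, 0 < ⟪α, H⟫)
variable {SH : Set E} (hSH : SH = {α ∈ R | ⟪α, H⟫ = 2})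

include hR hS hH in
lemma root_pairing_ne_zero {γ : E} (hγ : γ ∈ R) : ⟪γ, H⟫ ≠ 0 := by
  obtain ⟨c, hsupp, hrep, hsign⟩ := hS.2.2 γ hγ
  have hcs : ⟪γ, H⟫ = ∑ α ∈ c.support, (c α : ℝ) * ⟪α, H⟫ := by
    rw [hrep, Finsupp.sum, sum_inner]
    exact Finset.sum_congr rfl fun α _ => real_inner_smul_left _ _ _
  intro h0
  have hne : c.support.Nonempty := by
    rcases Finset.eq_empty_or_nonempty c.support with he | hne
    · exact absurd (by rwa [hrep, Finsupp.sum, he, Finset.sum_empty] at hγ) hR.2.1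
    · exact hne
  obtain ⟨α₀, hα₀⟩ := hne
  have hα₀S : α₀ ∈ S := hsupp hα₀
  have hα₀ne : c α₀ ≠ 0 := Finsupp.mem_support_iff.mp hα₀
  rcases hsign with hpos | hneg
  · have hterm : ∀ α ∈ c.support, 0 ≤ (c α : ℝ) * ⟪α, H⟫ := fun α hα =>
      mul_nonneg (by exact_mod_cast hpos α) (le_of_lt (hH α (hsupp hα)))
    have := (Finset.sum_eq_zero_iff_of_nonneg hterm).mp (by rw [← hcs, h0]) α₀ hα₀
    have := mul_eq_zero.mp this
    rcases this with h | h
    · exact hα₀ne (by exact_mod_cast h)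
    · exact (ne_of_gt (hH α₀ hα₀S)) h
  · have hterm : ∀ α ∈ c.support, (c α : ℝ) * ⟪α, H⟫ ≤ 0 := fun α hα =>
      mul_nonpos_of_nonpos_of_nonneg (by exact_mod_cast hneg α) (le_of_lt (hH α (hsupp hα)))
    have := (Finset.sum_eq_zero_iff_of_nonpos hterm).mp (by rw [← hcs, h0]) α₀ hα₀
    have := mul_eq_zero.mp this
    rcases this with h | h
    · exact hα₀ne (by exact_mod_cast h)
    · exact (ne_of_gt (hH α₀ hα₀S)) h

include hR hSH in
lemma closure_preserves {w : Function.End E} (hw : w ∈ Submonoid.closure (sRefl '' SH)) :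
    ∀ x, x ∈ R → x ∈ Submodule.span ℤ SH → w x ∈ R ∧ w x ∈ Submodule.span ℤ SH := by
  induction hw using Submonoid.closure_induction with
  | mem w hw =>
    obtain ⟨β, hβ, rfl⟩ := hw
    have hβR : β ∈ R := by rw [hSH] at hβ; exact hβ.1
    intro x hx hxs
    constructor
    · exact hR.2.2.2.1 β hβR x hx
    · obtain ⟨n, hn⟩ := hR.2.2.1 β hβR x hx
      rw [sRefl_apply, hn, Int.cast_smul_eq_zsmul]
      exact Submodule.sub_mem _ hxs (Submodule.smul_mem _ n (Submodule.subset_span hβ))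
  | one => exact fun x hx hxs => ⟨hx, hxs⟩
  | mul w₁ w₂ h₁ h₂ ih₁ ih₂ =>
    intro x hx hxs
    obtain ⟨h1, h2⟩ := ih₂ x hx hxs
    exact ih₁ _ h1 h2

include hR hSH in
lemma subSystem_sub :
    subSystem SH ⊆ R ∧ subSystem SH ⊆ (Submodule.span ℤ SH : Set E) := by
  constructor <;> rintro γ ⟨w, hw, α, hα, rfl⟩
  · exact (closure_preserves hR hSH hw α (by rw [hSH] at hα; exact hα.1)
      (Submodule.subset_span hα)).1
  · exact (closure_preserves hR hSH hw α (by rw [hSH] at hα; exact hα.1)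
      (Submodule.subset_span hα)).2

include hSH in
lemma pairing_even {x : E} (hx : x ∈ Submodule.span ℤ SH) : ∃ k : ℤ, ⟪x, H⟫ = 2 * k := by
  induction hx using Submodule.span_induction with
  | mem α hα => exact ⟨1, by rw [hSH] at hα; simpa using hα.2⟩
  | zero => exact ⟨0, by simp⟩
  | add x y _ _ ihx ihy =>
    obtain ⟨k, hk⟩ := ihx; obtain ⟨l, hl⟩ := ihy
    exact ⟨k + l, by rw [inner_add_left, hk, hl]; push_cast; ring⟩
  | smul n x _ ihx =>
    obtain ⟨k, hk⟩ := ihx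
    refine ⟨n * k, ?_⟩
    rw [← Int.cast_smul_eq_zsmul ℝ, real_inner_smul_left, hk]
    push_cast; ring

end Main


section Main2

variable {E : Type*} [NormedAddCommGroup E] [InnerProductSpace ℝ E]
variable {R S : Set E} (hR : IsRootSystem R) (hS : IsBase R S)
variable {H : E} (hH : ∀ α ∈ S, 0 < ⟪α, H⟫)
variable {SH : Set E} (hSH : SH = {α ∈ R | ⟪α, H⟫ = 2})

include hR hSH in
lemma sub_mem_subSystem {α β : E} (hα : α ∈ subSystem SH) (hβ : β ∈ subSystem SH)
    (hip : 0 < ⟪α, β⟫) (hne : α ≠ β) : α - β ∈ subSystem SH := by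
  have hαR : α ∈ R := (subSystem_sub hR hSH).1 hα
  have hβR : β ∈ R := (subSystem_sub hR hSH).1 hβ
  have hα0 : α ≠ 0 := fun h => hR.2.1 (h ▸ hαR)
  have hβ0 : β ≠ 0 := fun h => hR.2.1 (h ▸ hβR)
  have hαα : (0:ℝ) < ⟪α, α⟫ := by
    rcases (real_inner_self_nonneg (x := α)).lt_or_eq with h | h
    · exact h
    · exact absurd ((inner_self_eq_zero (𝕜 := ℝ)).mp h.symm) hα0
  have hββ : (0:ℝ) < ⟪β, β⟫ := by
    rcases (real_inner_self_nonneg (x := β)).lt_or_eq with h | h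
    · exact h
    · exact absurd ((inner_self_eq_zero (𝕜 := ℝ)).mp h.symm) hβ0
  obtain ⟨k₁, hk₁⟩ := hR.2.2.1 β hβR α hαR  -- 2⟪α,β⟫/⟪β,β⟫ = k₁
  obtain ⟨k₂, hk₂⟩ := hR.2.2.1 α hαR β hβR  -- 2⟪β,α⟫/⟪α,α⟫ = k₂
  have hk₁pos : (0:ℝ) < k₁ := by rw [← hk₁]; positivity
  have hk₂pos : (0:ℝ) < k₂ := by
    rw [← hk₂]; rw [real_inner_comm] at hip; positivity
  have hk₁1 : 1 ≤ k₁ := by exact_mod_cast hk₁pos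
  have hk₂1 : 1 ≤ k₂ := by exact_mod_cast hk₂pos
  rcases eq_or_lt_of_le hk₁1 with h1 | h1
  · -- k₁ = 1 : sRefl β α = α - β
    have : sRefl β α = α - β := by
      rw [sRefl_apply, hk₁, ← h1]
      norm_num
    rw [← this]
    exact sRefl_mem_subSystem hβ hα
  · rcases eq_or_lt_of_le hk₂1 with h2 | h2
    · have : sRefl α β = β - α := by
        rw [sRefl_apply, hk₂, ← h2]
        norm_num
      have hmem : β - α ∈ subSystem SH := this ▸ sRefl_mem_subSystem hα hβ
      have := neg_mem_subSystem hmem (by simpa [sub_eq_zero] using hne.symm)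
      simpa using this
    · -- k₁ ≥ 2, k₂ ≥ 2 : contradiction
      exfalso
      have hb1 : ⟪β, β⟫ ≤ ⟪α, β⟫ := by
        have : (2:ℝ) ≤ k₁ := by exact_mod_cast h1
        rw [← hk₁, le_div_iff₀ hββ] at this
        linarith
      have hb2 : ⟪α, α⟫ ≤ ⟪α, β⟫ := by
        have : (2:ℝ) ≤ k₂ := by exact_mod_cast h2
        rw [← hk₂, le_div_iff₀ hαα] at this
        have hc := real_inner_comm β α
        linarith
      have : ⟪α - β, α - β⟫ ≤ 0 := by
        rw [inner_sub_left, inner_sub_right, inner_sub_right]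
        have hc := real_inner_comm β α
        linarith
      have : α - β = 0 := by
        have h := real_inner_self_nonneg (x := α - β)
        have : ⟪α - β, α - β⟫ = 0 := le_antisymm this h
        exact (inner_self_eq_zero (𝕜 := ℝ)).mp this
      exact hne (by rwa [sub_eq_zero] at this)

end Main2


section Obtuse

variable {E : Type*} [NormedAddCommGroup E] [InnerProductSpace ℝ E]

lemma linearIndependent_of_obtuse {Δ : Set E} {H : E} (hpos : ∀ v ∈ Δ, 0 < ⟪v, H⟫)
    (hobtuse : ∀ v ∈ Δ, ∀ w ∈ Δ, v ≠ w → ⟪v, w⟫ ≤ 0) :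
    LinearIndependent ℝ ((↑) : Δ → E) := by
  rw [linearIndependent_iff']
  intro s g hsum i hi
  set sp := s.filter (fun i => 0 < g i) with hsp
  set sn := s.filter (fun i => g i < 0) with hsn
  have hsplit : (∑ i ∈ sp, g i • (i : E)) + ∑ i ∈ s.filter (fun i => ¬ 0 < g i), g i • (i : E) = 0 := by
    rw [Finset.sum_filter_add_sum_filter_not]; exact hsum
  have hsub : sn ⊆ s.filter (fun i => ¬ 0 < g i) := by
    intro j hj
    obtain ⟨h1, h2⟩ := Finset.mem_filter.mp hj
    exact Finset.mem_filter.mpr ⟨h1, not_lt.mpr (le_of_lt h2)⟩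
  have hzero : ∀ j ∈ s.filter (fun i => ¬ 0 < g i), j ∉ sn → g j • (j : E) = 0 := by
    intro j hj hjn
    obtain ⟨h1, h2⟩ := Finset.mem_filter.mp hj
    have h3 : ¬ g j < 0 := fun h => hjn (Finset.mem_filter.mpr ⟨h1, h⟩)
    rw [le_antisymm (not_lt.mp h2) (not_lt.mp h3), zero_smul]
  have hneg : ∑ i ∈ s.filter (fun i => ¬ 0 < g i), g i • (i : E)
      = ∑ i ∈ sn, g i • (i : E) := (Finset.sum_subset hsub hzero).symm
  have hFG : (∑ i ∈ sp, g i • (i : E)) = ∑ i ∈ sn, (-g i) • (i : E) := by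
    have h' := eq_neg_of_add_eq_zero_left hsplit
    rw [hneg] at h'
    rw [h', ← Finset.sum_neg_distrib]
    exact Finset.sum_congr rfl fun j _ => (neg_smul _ _).symm
  have hinner : ⟪(∑ i ∈ sp, g i • (i : E)), ∑ j ∈ sn, (-g j) • (j : E)⟫ ≤ 0 := by
    rw [sum_inner]
    refine Finset.sum_nonpos fun k hk => ?_
    rw [real_inner_smul_left, inner_sum]
    refine mul_nonpos_of_nonneg_of_nonpos (le_of_lt (Finset.mem_filter.mp hk).2) ?_
    refine Finset.sum_nonpos fun l hl => ?_
    rw [real_inner_smul_right]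
    have hkl : (k : E) ≠ (l : E) := by
      intro h
      have : k = l := Subtype.coe_injective h
      subst this
      exact absurd (Finset.mem_filter.mp hl).2 (not_lt.mpr (le_of_lt (Finset.mem_filter.mp hk).2))
    have := hobtuse (k : E) k.2 (l : E) l.2 hkl
    have hgl := (Finset.mem_filter.mp hl).2
    nlinarith
  have hF0 : (∑ i ∈ sp, g i • (i : E)) = 0 := by
    have h1 : ⟪(∑ i ∈ sp, g i • (i : E)), ∑ i ∈ sp, g i • (i : E)⟫ ≤ 0 := by
      nth_rewrite 2 [hFG]
      exact hinner
    exact (inner_self_eq_zero (𝕜 := ℝ)).mp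
      (le_antisymm h1 real_inner_self_nonneg)
  have hspe : sp = ∅ := by
    by_contra hne
    have hsum2 : ⟪(∑ i ∈ sp, g i • (i : E)), H⟫ = 0 := by rw [hF0, inner_zero_left]
    rw [sum_inner] at hsum2
    have : 0 < ∑ i ∈ sp, ⟪g i • (i : E), H⟫ := by
      refine Finset.sum_pos (fun k hk => ?_) (Finset.nonempty_of_ne_empty hne)
      rw [real_inner_smul_left]
      exact mul_pos (Finset.mem_filter.mp hk).2 (hpos _ k.2)
    linarith
  have hsne : sn = ∅ := by
    by_contra hne
    have hG0 : (∑ i ∈ sn, (-g i) • (i : E)) = 0 := by rw [← hFG]; exact hF0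
    have hsum2 : ⟪(∑ i ∈ sn, (-g i) • (i : E)), H⟫ = 0 := by rw [hG0, inner_zero_left]
    rw [sum_inner] at hsum2
    have : 0 < ∑ i ∈ sn, ⟪(-g i) • (i : E), H⟫ := by
      refine Finset.sum_pos (fun k hk => ?_) (Finset.nonempty_of_ne_empty hne)
      rw [real_inner_smul_left]
      exact mul_pos (neg_pos.mpr (Finset.mem_filter.mp hk).2) (hpos _ k.2)
    linarith
  by_contra hgi
  rcases lt_or_gt_of_ne hgi with h | h
  · have : i ∈ sn := Finset.mem_filter.mpr ⟨hi, h⟩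
    rw [hsne] at this
    exact absurd this (Finset.notMem_empty i)
  · have : i ∈ sp := Finset.mem_filter.mpr ⟨hi, h⟩
    rw [hspe] at this
    exact absurd this (Finset.notMem_empty i)

end Obtuse


noncomputable def Pset {E : Type*} [NormedAddCommGroup E] [InnerProductSpace ℝ E]
    (SH : Set E) (H : E) : Set E := {γ ∈ subSystem SH | 0 < ⟪γ, H⟫}

noncomputable def Dset {E : Type*} [NormedAddCommGroup E] [InnerProductSpace ℝ E]
    (SH : Set E) (H : E) : Set E :=
  {γ ∈ Pset SH H | ¬∃ β ∈ Pset SH H, ∃ δ ∈ Pset SH H, γ = β + δ}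

section Main3

variable {E : Type*} [NormedAddCommGroup E] [InnerProductSpace ℝ E] [FiniteDimensional ℝ E]
variable {R S : Set E} (hR : IsRootSystem R) (hS : IsBase R S)
variable {H : E} (hH : ∀ α ∈ S, 0 < ⟪α, H⟫)
variable {SH : Set E} (hSH : SH = {α ∈ R | ⟪α, H⟫ = 2})

include hR hS hH hSH in
/-- Every element of the subsystem pairs with `H` to a nonzero even integer. -/
lemma subSystem_pairing {γ : E} (hγ : γ ∈ subSystem SH) :
    ∃ k : ℤ, ⟪γ, H⟫ = 2 * k ∧ k ≠ 0 := by
  obtain ⟨k, hk⟩ := pairing_even hSH ((subSystem_sub hR hSH).2 hγ)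
  refine ⟨k, hk, fun h0 => ?_⟩
  rw [h0] at hk
  exact root_pairing_ne_zero hR hS hH ((subSystem_sub hR hSH).1 hγ) (by simpa using hk)

include hR hS hH hSH in
/-- Elements of the positive part have pairing at least 2. -/
lemma Pset_pairing {γ : E} (hγ : γ ∈ Pset SH H) : 2 ≤ ⟪γ, H⟫ := by
  obtain ⟨k, hk, hk0⟩ := subSystem_pairing hR hS hH hSH hγ.1
  have : 0 < (k : ℝ) := by
    have := hγ.2
    rw [hk] at this
    linarith
  have : 1 ≤ k := by exact_mod_cast this
  rw [hk]
  have : (1:ℝ) ≤ k := by exact_mod_cast this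
  linarith

include hR hS hH hSH in
lemma SH_subset_Dset : SH ⊆ Dset SH H := by
  intro α hα
  have hα2 : ⟪α, H⟫ = 2 := by rw [hSH] at hα; exact hα.2
  have hαP : α ∈ Pset SH H := ⟨subset_subSystem hα, by rw [hα2]; norm_num⟩
  refine ⟨hαP, ?_⟩
  rintro ⟨β, hβ, δ, hδ, rfl⟩
  have h1 := Pset_pairing hR hS hH hSH hβ
  have h2 := Pset_pairing hR hS hH hSH hδ
  rw [inner_add_left] at hα2
  linarith

include hR hS hH hSH in
lemma Dset_obtuse : ∀ γ₁ ∈ Dset SH H, ∀ γ₂ ∈ Dset SH H, γ₁ ≠ γ₂ → ⟪γ₁, γ₂⟫ ≤ 0 := by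
  intro γ₁ hγ₁ γ₂ hγ₂ hne
  by_contra hip
  push_neg at hip
  have hδ : γ₁ - γ₂ ∈ subSystem SH := sub_mem_subSystem hR hSH hγ₁.1.1 hγ₂.1.1 hip hne
  have hδR : γ₁ - γ₂ ∈ R := (subSystem_sub hR hSH).1 hδ
  have hδ0 : γ₁ - γ₂ ≠ 0 := sub_ne_zero.mpr hne
  have hδH : ⟪γ₁ - γ₂, H⟫ ≠ 0 := root_pairing_ne_zero hR hS hH hδR
  rcases lt_or_gt_of_ne hδH with hlt | hgt
  · -- ⟪γ₁ - γ₂, H⟫ < 0 : γ₂ = -(γ₁-γ₂) + γ₁ decomposes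
    have hmem : -(γ₁ - γ₂) ∈ subSystem SH := neg_mem_subSystem hδ hδ0
    have hP : -(γ₁ - γ₂) ∈ Pset SH H := ⟨hmem, by rw [inner_neg_left]; linarith⟩
    exact hγ₂.2 ⟨-(γ₁ - γ₂), hP, γ₁, hγ₁.1, by abel⟩
  · -- positive: γ₁ = (γ₁-γ₂) + γ₂ decomposes
    have hP : γ₁ - γ₂ ∈ Pset SH H := ⟨hδ, hgt⟩
    exact hγ₁.2 ⟨γ₁ - γ₂, hP, γ₂, hγ₂.1, by abel⟩

end Main3

section Main4

set_option linter.unusedSectionVars false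

variable {E : Type*} [NormedAddCommGroup E] [InnerProductSpace ℝ E] [FiniteDimensional ℝ E]
variable {R S : Set E} (hR : IsRootSystem R) (hS : IsBase R S)
variable {H : E} (hH : ∀ α ∈ S, 0 < ⟪α, H⟫)
variable {SH : Set E} (hSH : SH = {α ∈ R | ⟪α, H⟫ = 2})

lemma zspan_sub_rspan (s : Set E) :
    (Submodule.span ℤ s : Set E) ⊆ (Submodule.span ℝ s : Set E) := by
  intro x hx
  induction hx using Submodule.span_induction with
  | mem x hx => exact Submodule.subset_span hx
  | zero => exact Submodule.zero_mem _
  | add x y _ _ hx hy => exact Submodule.add_mem _ hx hy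
  | smul n x _ hx =>
    rw [← Int.cast_smul_eq_zsmul ℝ]
    exact Submodule.smul_mem _ _ hx

include hR hSH in
lemma subSystem_subset_rspan : subSystem SH ⊆ (Submodule.span ℝ SH : Set E) :=
  fun γ hγ => zspan_sub_rspan SH ((subSystem_sub hR hSH).2 hγ)

include hR hS hH hSH in
lemma Dset_eq_SH : Dset SH H = SH := by
  have hSHsub : SH ⊆ Dset SH H := SH_subset_Dset hR hS hH hSH
  have hDfin : (Dset SH H).Finite :=
    hR.1.subset (fun γ hγ => (subSystem_sub hR hSH).1 hγ.1.1)
  have hSHfin : SH.Finite := hDfin.subset hSHsub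
  have hDind : LinearIndependent ℝ ((↑) : Dset SH H → E) :=
    linearIndependent_of_obtuse (fun v hv => hv.1.2) (Dset_obtuse hR hS hH hSH)
  have hSHind : LinearIndependent ℝ ((↑) : SH → E) :=
    LinearIndepOn.mono (v := id) hDind hSHsub
  -- Dset lies in span ℝ SH
  have hDspan : Dset SH H ⊆ (Submodule.span ℝ SH : Set E) :=
    fun γ hγ => subSystem_subset_rspan hR hSH hγ.1.1
  -- cardinality comparison
  haveI hfinD : Fintype (Dset SH H) := hDfin.fintype
  haveI hfinSH : Fintype SH := hSHfin.fintype
  have hrank : Module.finrank ℝ (Submodule.span ℝ SH) = SH.toFinset.card :=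
    finrank_span_set_eq_card hSHind
  set W := Submodule.span ℝ SH with hW
  have hvind : LinearIndependent ℝ (fun i : Dset SH H => (⟨(i : E), hDspan i.2⟩ : W)) := by
    apply LinearIndependent.of_comp W.subtype
    convert hDind
    rfl
  have hcard : Fintype.card (Dset SH H) ≤ Module.finrank ℝ W :=
    hvind.fintype_card_le_finrank
  rw [hrank] at hcard
  have h1 : (Dset SH H).ncard = Fintype.card (Dset SH H) := by
    rw [← Nat.card_coe_set_eq, Nat.card_eq_fintype_card]
  have h2 : SH.ncard = SH.toFinset.card := Set.ncard_eq_toFinset_card' SH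
  exact (Set.eq_of_subset_of_ncard_le hSHsub (by rw [h1, h2]; exact hcard) hDfin).symm

end Main4


section Main5

set_option linter.unusedSectionVars false

variable {E : Type*} [NormedAddCommGroup E] [InnerProductSpace ℝ E] [FiniteDimensional ℝ E]
variable {R S : Set E} (hR : IsRootSystem R) (hS : IsBase R S)
variable {H : E} (hH : ∀ α ∈ S, 0 < ⟪α, H⟫)
variable {SH : Set E} (hSH : SH = {α ∈ R | ⟪α, H⟫ = 2})

include hR hS hH hSH in
lemma nonneg_combo_of_P (n : ℕ) : ∀ γ ∈ Pset SH H, ⟪γ, H⟫ = 2 * n → IsNonnegCombo SH γ := by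
  induction n using Nat.strong_induction_on with
  | _ n ih =>
    intro γ hγ hn
    classical
    by_cases hd : γ ∈ Dset SH H
    · rw [Dset_eq_SH hR hS hH hSH] at hd
      refine ⟨Finsupp.single γ 1, ?_, ?_, ?_⟩
      · rw [Finsupp.support_single_ne_zero γ one_ne_zero]
        simpa using hd
      · rw [Finsupp.sum_single_index (by simp)]
        simp
      · intro α
        rw [Finsupp.single_apply]
        split <;> norm_num
    · have hdec : ∃ β ∈ Pset SH H, ∃ δ ∈ Pset SH H, γ = β + δ := by
        by_contra hcon
        exact hd ⟨hγ, hcon⟩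
      obtain ⟨β, hβ, δ, hδ, rfl⟩ := hdec
      obtain ⟨kβ, hkβ, hkβ0⟩ := subSystem_pairing hR hS hH hSH hβ.1
      obtain ⟨kδ, hkδ, hkδ0⟩ := subSystem_pairing hR hS hH hSH hδ.1
      have hkβ1 : 1 ≤ kβ := by
        have := hβ.2; rw [hkβ] at this
        have : (0:ℝ) < kβ := by linarith
        exact_mod_cast this
      have hkδ1 : 1 ≤ kδ := by
        have := hδ.2; rw [hkδ] at this
        have : (0:ℝ) < kδ := by linarith
        exact_mod_cast this
      have hsum : kβ + kδ = (n : ℤ) := by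
        have : (2:ℝ) * ((kβ : ℝ) + kδ) = 2 * n := by
          rw [inner_add_left, hkβ, hkδ] at hn
          linarith
        have : ((kβ + kδ : ℤ) : ℝ) = ((n : ℤ) : ℝ) := by push_cast; linarith
        exact_mod_cast this
      have hβn : ⟪β, H⟫ = 2 * (kβ.toNat : ℕ) := by
        rw [hkβ]; congr 1; exact_mod_cast (Int.toNat_of_nonneg (by omega)).symm
      have hδn : ⟪δ, H⟫ = 2 * (kδ.toNat : ℕ) := by
        rw [hkδ]; congr 1; exact_mod_cast (Int.toNat_of_nonneg (by omega)).symm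
      obtain ⟨c₁, hc₁s, hc₁r, hc₁n⟩ := ih kβ.toNat (by omega) β hβ hβn
      obtain ⟨c₂, hc₂s, hc₂r, hc₂n⟩ := ih kδ.toNat (by omega) δ hδ hδn
      refine ⟨c₁ + c₂, ?_, ?_, ?_⟩
      · refine Set.Subset.trans ?_ (Set.union_subset hc₁s hc₂s)
        intro x hx
        have := Finsupp.support_add (g₁ := c₁) (g₂ := c₂) (by simpa using hx)
        simpa using this
      · rw [Finsupp.sum_add_index' (fun a => by simp) (fun a b₁ b₂ => by push_cast; rw [add_smul]),
          ← hc₁r, ← hc₂r]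
      · intro α
        simp only [Finsupp.add_apply]
        exact add_nonneg (hc₁n α) (hc₂n α)

include hR hS hH hSH in
lemma combo_of_subSystem {γ : E} (hγ : γ ∈ subSystem SH) :
    ∃ c : E →₀ ℤ, ↑c.support ⊆ SH ∧ γ = c.sum (fun α n => (n : ℝ) • α) ∧
      ((∀ α, 0 ≤ c α) ∨ (∀ α, c α ≤ 0)) := by
  classical
  obtain ⟨k, hk, hk0⟩ := subSystem_pairing hR hS hH hSH hγ
  rcases lt_or_gt_of_ne hk0 with hneg | hpos
  · -- negative: use -γ
    have hγ0 : γ ≠ 0 := fun h => hR.2.1 (h ▸ (subSystem_sub hR hSH).1 hγ)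
    have hmem : -γ ∈ subSystem SH := neg_mem_subSystem hγ hγ0
    have hP : -γ ∈ Pset SH H := ⟨hmem, by
      rw [inner_neg_left, hk]
      have : (k:ℝ) < 0 := by exact_mod_cast hneg
      linarith⟩
    have hpair : ⟪-γ, H⟫ = 2 * ((-k).toNat : ℕ) := by
      rw [inner_neg_left, hk]
      have : ((-k).toNat : ℤ) = -k := Int.toNat_of_nonneg (by omega)
      have : (((-k).toNat : ℕ) : ℝ) = -(k : ℝ) := by exact_mod_cast this
      rw [this]; ring
    obtain ⟨c, hcs, hcr, hcn⟩ := nonneg_combo_of_P hR hS hH hSH (-k).toNat (-γ) hP hpair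
    refine ⟨-c, by simpa using hcs, ?_, Or.inr fun α => by simpa using hcn α⟩
    have : (-c).sum (fun α n => (n : ℝ) • α) = - c.sum (fun α n => (n : ℝ) • α) := by
      rw [Finsupp.sum_neg_index (fun a => by simp)]
      rw [← Finsupp.sum_neg]
      congr 1
      ext a b
      push_cast
      rw [neg_smul]
    rw [this, ← hcr, neg_neg]
  · have hP : γ ∈ Pset SH H := ⟨hγ, by
      rw [hk]
      have : (0:ℝ) < k := by exact_mod_cast hpos
      linarith⟩
    have hpair : ⟪γ, H⟫ = 2 * (k.toNat : ℕ) := by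
      rw [hk]; congr 1; exact_mod_cast (Int.toNat_of_nonneg (by omega)).symm
    obtain ⟨c, hcs, hcr, hcn⟩ := nonneg_combo_of_P hR hS hH hSH k.toNat γ hP hpair
    exact ⟨c, hcs, hcr, Or.inl hcn⟩

end Main5

/-- For `H` in the open fundamental Weyl chamber with `S(H) = {α ∈ R : ⟪α,H⟫ = 2}`
nonempty, the set `R(H)` of images of `S(H)` under the group generated by the
reflections in elements of `S(H)` is a reduced crystallographic root system lying
in the span of `S(H)`, it is contained in `R`, and `S(H)` is a base of `R(H)`. -/
theorem subSystem_of_SH_isRootSystem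
    {E : Type*} [NormedAddCommGroup E] [InnerProductSpace ℝ E] [FiniteDimensional ℝ E]
    (R S : Set E) (hR : IsRootSystem R) (hS : IsBase R S)
    (H : E) (hH : ∀ α ∈ S, 0 < ⟪α, H⟫)
    (SH : Set E) (hSH : SH = {α ∈ R | ⟪α, H⟫ = 2}) (hne : SH.Nonempty) :
    IsRootSystem (subSystem SH) ∧
    subSystem SH ⊆ R ∧
    subSystem SH ⊆ (Submodule.span ℝ SH : Set E) ∧
    IsBase (subSystem SH) SH := by

  have hsub : subSystem SH ⊆ R := (subSystem_sub hR hSH).1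
  refine ⟨⟨hR.1.subset hsub, fun h => hR.2.1 (hsub h),
      fun α hα β hβ => hR.2.2.1 α (hsub hα) β (hsub hβ),
      fun α hα β hβ => sRefl_mem_subSystem hα hβ,
      fun α hα t ht => hR.2.2.2.2 α (hsub hα) t (hsub ht)⟩,
    hsub, subSystem_subset_rspan hR hSH,
    subset_subSystem,
    LinearIndepOn.mono (v := id) (linearIndependent_of_obtuse (Δ := Dset SH H) (fun v hv => hv.1.2)
      (Dset_obtuse hR hS hH hSH)) (SH_subset_Dset hR hS hH hSH),
    fun β hβ => combo_of_subSystem hR hS hH hSH hβ⟩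
end

section
/- Let w : ℝ → ℂ be a differentiable function with w(r) ≠ 0 for all r, and suppose that w(r)·(conj ∘ w)'(r) − conj(w(r))·w'(r) = 0 for all r ∈ ℝ. Then w is real up to a constant phase: there exist a constant c ∈ ℂ with |c| = 1 and a function u : ℝ → ℝ such that w(r) = c·u(r) for all r. -/
/-- A nowhere-vanishing differentiable function `w : ℝ → ℂ` satisfying
`w·(conj ∘ w)' − conj(w)·w' = 0` is real up to a constant phase: `w = c·u` for a
unimodular constant `c ∈ ℂ` and a real-valued function `u`. -/
theorem real_up_to_phase_of_wronskian_zero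
    (w : ℝ → ℂ) (hdiff : Differentiable ℝ w) (hnz : ∀ r : ℝ, w r ≠ 0)
    (h : ∀ r : ℝ,
      w r * deriv (fun t => starRingEnd ℂ (w t)) r - starRingEnd ℂ (w r) * deriv w r = 0) :
    ∃ c : ℂ, ‖c‖ = 1 ∧ ∃ u : ℝ → ℝ, ∀ r : ℝ, w r = c * (u r : ℂ) := by
  set f : ℝ → ℂ := fun t => starRingEnd ℂ (w t) with hf_def
  have hfnz : ∀ r, f r ≠ 0 := fun r => star_ne_zero.mpr (hnz r)
  have hf : ∀ r : ℝ, HasDerivAt f (starRingEnd ℂ (deriv w r)) r := by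
    intro r
    exact (Complex.conjCLE.toContinuousLinearMap.hasFDerivAt).comp_hasDerivAt r
      (hdiff r).hasDerivAt
  have hderivf : ∀ r, deriv f r = starRingEnd ℂ (deriv w r) := fun r => (hf r).deriv
  set g : ℝ → ℂ := fun t => w t / f t with hg_def
  have hg : ∀ r : ℝ, HasDerivAt g 0 r := by
    intro r
    have hd : HasDerivAt g
        ((deriv w r * f r - w r * starRingEnd ℂ (deriv w r)) / (f r) ^ 2) r :=
      ((hdiff r).hasDerivAt).div (hf r) (hfnz r)
    have hnum : deriv w r * f r - w r * starRingEnd ℂ (deriv w r) = 0 := by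
      have := h r
      rw [hderivf r] at this
      simp only [hf_def] at this ⊢
      linear_combination -this
    rwa [hnum, zero_div] at hd
  have hconst : ∀ r : ℝ, g r = g 0 := by
    intro r
    exact is_const_of_deriv_eq_zero (fun x => (hg x).differentiableAt)
      (fun x => (hg x).deriv) r 0
  set k : ℂ := g 0 with hk_def
  have hknz : k ≠ 0 := div_ne_zero (hnz 0) (hfnz 0)
  have habsk : ‖k‖ = 1 := by
    simp only [hk_def, hg_def, hf_def, norm_div, Complex.norm_conj]
    exact div_self (by simpa using (hnz 0))
  set c : ℂ := Complex.exp (Complex.log k / 2) with hc_def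
  have hc2 : c ^ 2 = k := by
    rw [hc_def, ← Complex.exp_nat_mul,
      show ((2:ℕ):ℂ) * (Complex.log k / 2) = Complex.log k by push_cast; ring]
    exact Complex.exp_log hknz
  have hcabs : ‖c‖ = 1 := by
    rw [hc_def, Complex.norm_exp]
    have : (Complex.log k / 2).re = Real.log ‖k‖ / 2 := by
      simp [Complex.div_re, Complex.log_re]
    rw [this, habsk, Real.log_one]
    norm_num
  have hcnz : c ≠ 0 := Complex.exp_ne_zero _
  refine ⟨c, hcabs, fun r => (w r / c).re, fun r => ?_⟩
  have hwk : starRingEnd ℂ (w r) = w r / k := by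
    have := hconst r
    simp only [hg_def, hf_def] at this
    have hz : (starRingEnd ℂ) (w r) ≠ 0 := hfnz r
    rw [div_eq_iff hz] at this
    rw [eq_div_iff hknz]
    linear_combination -this
  have hcc : starRingEnd ℂ c = 1 / c := by
    have : starRingEnd ℂ c * c = 1 := by
      have h1 : Complex.normSq c = 1 := by rw [Complex.normSq_eq_norm_sq, hcabs]; norm_num
      calc starRingEnd ℂ c * c = (Complex.normSq c : ℂ) := by
            rw [mul_comm, Complex.mul_conj]
        _ = 1 := by rw [h1]; norm_num
    rw [eq_div_iff hcnz]
    exact this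
  have hreal : starRingEnd ℂ (w r / c) = w r / c := by
    rw [map_div₀, hwk, hcc]
    rw [← hc2]
    field_simp
  have : ((w r / c).re : ℂ) = w r / c := Complex.conj_eq_iff_re.mp hreal
  rw [this]
  field_simp
end
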